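/- arXiv:2403.18378 — 4 statements merged into one kernel-verified Lean document; each statement's English description precedes it below -/
import Mathlib

section
/- Let V be a real vector space equipped with two symmetric positive semidefinite bilinear forms a and m, let k > 0, and define b(u,v) := a(u,v) − k² m(u,v) and the k-weighted seminorm ‖u‖_{1,k} := √(a(u,u) + k² m(u,u)). Then for all u, v ∈ V one has |b(u,v)| ≤ ‖u‖_{1,k} · ‖v‖_{1,k}. -/
/-- Cauchy–Schwarz for a symmetric positive semidefinite bilinear form. -/
lemma cs_aux {V : Type*} [AddCommGroup V] [Module ℝ V]
    (a : V →ₗ[ℝ] V →ₗ[ℝ] ℝ)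
    (ha_symm : ∀ u v, a u v = a v u) (ha_pos : ∀ u, 0 ≤ a u u)
    (u v : V) : (a u v) ^ 2 ≤ a u u * a v v := by
  have h : ∀ t : ℝ, 0 ≤ a v v * (t * t) + (2 * a u v) * t + a u u := by
    intro t
    have h0 := ha_pos (u + t • v)
    simp only [map_add, map_smul, LinearMap.add_apply, LinearMap.smul_apply,
      smul_eq_mul] at h0
    rw [ha_symm v u] at h0
    nlinarith [h0]
  have hd := discrim_le_zero h
  rw [discrim] at hd
  nlinarith [hd]

/-- Lemma 3.11: boundedness of the indefinite Helmholtz form in the k-weighted norm. -/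
theorem stmt4 {V : Type*} [AddCommGroup V] [Module ℝ V]
    (a m : V →ₗ[ℝ] V →ₗ[ℝ] ℝ)
    (ha_symm : ∀ u v, a u v = a v u) (ha_pos : ∀ u, 0 ≤ a u u)
    (hm_symm : ∀ u v, m u v = m v u) (hm_pos : ∀ u, 0 ≤ m u u)
    (k : ℝ) (hk : 0 < k)
    (b : V → V → ℝ) (hb : ∀ u v, b u v = a u v - k ^ 2 * m u v)
    (u v : V) :
    |b u v| ≤
      Real.sqrt (a u u + k ^ 2 * m u u) * Real.sqrt (a v v + k ^ 2 * m v v) := by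
  have hca := cs_aux a ha_symm ha_pos u v
  have hcm := cs_aux m hm_symm hm_pos u v
  set A := Real.sqrt (a u u) with hA
  set B := Real.sqrt (a v v) with hB
  set C := Real.sqrt (m u u) with hC
  set D := Real.sqrt (m v v) with hD
  have hA2 : A ^ 2 = a u u := Real.sq_sqrt (ha_pos u)
  have hB2 : B ^ 2 = a v v := Real.sq_sqrt (ha_pos v)
  have hC2 : C ^ 2 = m u u := Real.sq_sqrt (hm_pos u)
  have hD2 : D ^ 2 = m v v := Real.sq_sqrt (hm_pos v)
  have hA0 : 0 ≤ A := Real.sqrt_nonneg _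
  have hB0 : 0 ≤ B := Real.sqrt_nonneg _
  have hC0 : 0 ≤ C := Real.sqrt_nonneg _
  have hD0 : 0 ≤ D := Real.sqrt_nonneg _
  have habs_a : |a u v| ≤ A * B := by
    rw [abs_le]
    constructor <;> nlinarith [hca, mul_nonneg hA0 hB0]
  have habs_m : |m u v| ≤ C * D := by
    rw [abs_le]
    constructor <;> nlinarith [hcm, mul_nonneg hC0 hD0]
  have h1 : |b u v| ≤ A * B + k ^ 2 * (C * D) := by
    rw [hb]
    calc |a u v - k ^ 2 * m u v| ≤ |a u v| + |k ^ 2 * m u v| := abs_sub _ _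
      _ = |a u v| + k ^ 2 * |m u v| := by
          rw [abs_mul, abs_of_nonneg (by positivity : (0:ℝ) ≤ k ^ 2)]
      _ ≤ A * B + k ^ 2 * (C * D) := by
          gcongr
  refine h1.trans ?_
  have hE : a u u + k ^ 2 * m u u = A ^ 2 + k ^ 2 * C ^ 2 := by rw [hA2, hC2]
  have hF : a v v + k ^ 2 * m v v = B ^ 2 + k ^ 2 * D ^ 2 := by rw [hB2, hD2]
  rw [hE, hF]
  have h2 : (A * B + k ^ 2 * (C * D)) ^ 2 ≤
      (A ^ 2 + k ^ 2 * C ^ 2) * (B ^ 2 + k ^ 2 * D ^ 2) := by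
    have key : (A ^ 2 + k ^ 2 * C ^ 2) * (B ^ 2 + k ^ 2 * D ^ 2)
        - (A * B + k ^ 2 * (C * D)) ^ 2 = k ^ 2 * (A * D - B * C) ^ 2 := by ring
    have hpos : 0 ≤ k ^ 2 * (A * D - B * C) ^ 2 := by positivity
    linarith
  have h3 : 0 ≤ A * B + k ^ 2 * (C * D) := by positivity
  calc A * B + k ^ 2 * (C * D)
      = Real.sqrt ((A * B + k ^ 2 * (C * D)) ^ 2) := (Real.sqrt_sq h3).symm
    _ ≤ Real.sqrt ((A ^ 2 + k ^ 2 * C ^ 2) * (B ^ 2 + k ^ 2 * D ^ 2)) :=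
        Real.sqrt_le_sqrt h2
    _ = Real.sqrt (A ^ 2 + k ^ 2 * C ^ 2) * Real.sqrt (B ^ 2 + k ^ 2 * D ^ 2) :=
        Real.sqrt_mul (by positivity) _
end

section
/- Let V be a real vector space equipped with two symmetric positive semidefinite bilinear forms a and m, let k > 0 and H > 0 with H·k ≤ 1/√2, and define b(u,v) := a(u,v) − k² m(u,v) and ‖u‖_{1,k} := √(a(u,u) + k² m(u,u)). Suppose u, w ∈ V satisfy b(w,w) = b(u,w) and m(w,w) ≤ (H²/2)·a(w,w). Then ‖w‖_{1,k} ≤ 2‖u‖_{1,k}. -/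
/-- Elementary two-dimensional Cauchy–Schwarz inequality. -/
lemma twoD_aux (p q r s k : ℝ) :
    (p * q + k ^ 2 * (r * s)) ^ 2 ≤ (p ^ 2 + k ^ 2 * r ^ 2) * (q ^ 2 + k ^ 2 * s ^ 2) := by
  nlinarith [mul_nonneg (sq_nonneg k) (sq_nonneg (p * s - r * q))]

/-- Abstract version of Lemma 3.12 (stability of the local projection operators). -/
theorem stmt5 {V : Type*} [AddCommGroup V] [Module ℝ V]
    (a m : V →ₗ[ℝ] V →ₗ[ℝ] ℝ)
    (ha_symm : ∀ u v, a u v = a v u) (ha_pos : ∀ u, 0 ≤ a u u)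
    (hm_symm : ∀ u v, m u v = m v u) (hm_pos : ∀ u, 0 ≤ m u u)
    (k H : ℝ) (hk : 0 < k) (hH : 0 < H) (hHk : H * k ≤ 1 / Real.sqrt 2)
    (b : V → V → ℝ) (hb : ∀ u v, b u v = a u v - k ^ 2 * m u v)
    (u w : V)
    (hproj : b w w = b u w)
    (hFried : m w w ≤ H ^ 2 / 2 * a w w) :
    Real.sqrt (a w w + k ^ 2 * m w w) ≤ 2 * Real.sqrt (a u u + k ^ 2 * m u u) := by
  set A := a w w with hA
  set M := m w w with hM
  set Au := a u u with hAu
  set Mu := m u u with hMu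
  have hA0 : 0 ≤ A := ha_pos w
  have hM0 : 0 ≤ M := hm_pos w
  have hAu0 : 0 ≤ Au := ha_pos u
  have hMu0 : 0 ≤ Mu := hm_pos u
  have hk2 : 0 < k ^ 2 := by positivity
  -- k² H² ≤ 1/2
  have hHk2 : H ^ 2 * k ^ 2 ≤ 1 / 2 := by
    have h2 : (0:ℝ) < Real.sqrt 2 := by positivity
    have := mul_self_le_mul_self (by positivity : (0:ℝ) ≤ H * k) hHk
    have hs : (1 / Real.sqrt 2) * (1 / Real.sqrt 2) = 1 / 2 := by
      rw [div_mul_div_comm, one_mul, Real.mul_self_sqrt (by norm_num : (0:ℝ) ≤ 2)]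
    nlinarith [this]
  -- norms
  set N := Real.sqrt (A + k ^ 2 * M) with hN
  set Nu := Real.sqrt (Au + k ^ 2 * Mu) with hNu
  have hN0 : 0 ≤ N := Real.sqrt_nonneg _
  have hNu0 : 0 ≤ Nu := Real.sqrt_nonneg _
  have hNsq : N ^ 2 = A + k ^ 2 * M := Real.sq_sqrt (by positivity)
  have hNusq : Nu ^ 2 = Au + k ^ 2 * Mu := Real.sq_sqrt (by positivity)
  -- Cauchy–Schwarz
  have csa : (a u w) ^ 2 ≤ Au * A := cs_aux a ha_symm ha_pos u w
  have csm : (m u w) ^ 2 ≤ Mu * M := cs_aux m hm_symm hm_pos u w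
  have haw : |a u w| ≤ Real.sqrt Au * Real.sqrt A := by
    rw [← Real.sqrt_mul hAu0, ← Real.sqrt_sq_eq_abs]
    exact Real.sqrt_le_sqrt csa
  have hmw : |m u w| ≤ Real.sqrt Mu * Real.sqrt M := by
    rw [← Real.sqrt_mul hMu0, ← Real.sqrt_sq_eq_abs]
    exact Real.sqrt_le_sqrt csm
  -- 2D Cauchy–Schwarz:  √Au √A + k² √Mu √M ≤ Nu * N
  have h2d : Real.sqrt Au * Real.sqrt A + k ^ 2 * (Real.sqrt Mu * Real.sqrt M)
      ≤ Nu * N := by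
    have hx1 : Real.sqrt Au ^ 2 = Au := Real.sq_sqrt hAu0
    have hx2 : Real.sqrt A ^ 2 = A := Real.sq_sqrt hA0
    have hx3 : Real.sqrt Mu ^ 2 = Mu := Real.sq_sqrt hMu0
    have hx4 : Real.sqrt M ^ 2 = M := Real.sq_sqrt hM0
    have hlhs0 : 0 ≤ Real.sqrt Au * Real.sqrt A + k ^ 2 * (Real.sqrt Mu * Real.sqrt M) := by
      positivity
    have hsq : (Real.sqrt Au * Real.sqrt A + k ^ 2 * (Real.sqrt Mu * Real.sqrt M)) ^ 2
        ≤ (Au + k ^ 2 * Mu) * (A + k ^ 2 * M) := by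
      have h := twoD_aux (Real.sqrt Au) (Real.sqrt A) (Real.sqrt Mu) (Real.sqrt M) k
      rwa [hx1, hx2, hx3, hx4] at h
    have hprod : Nu * N = Real.sqrt ((Au + k ^ 2 * Mu) * (A + k ^ 2 * M)) :=
      (Real.sqrt_mul (by positivity) _).symm
    calc Real.sqrt Au * Real.sqrt A + k ^ 2 * (Real.sqrt Mu * Real.sqrt M)
        = Real.sqrt ((Real.sqrt Au * Real.sqrt A + k ^ 2 * (Real.sqrt Mu * Real.sqrt M)) ^ 2) :=
          (Real.sqrt_sq hlhs0).symm
      _ ≤ Real.sqrt ((Au + k ^ 2 * Mu) * (A + k ^ 2 * M)) := Real.sqrt_le_sqrt hsq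
      _ = Nu * N := hprod.symm
  -- b u w ≤ Nu * N
  have hbuw : b u w ≤ Nu * N := by
    rw [hb]
    calc a u w - k ^ 2 * m u w ≤ |a u w| + k ^ 2 * |m u w| := by
          have h1 := le_abs_self (a u w)
          have h2 : -(m u w) ≤ |m u w| := neg_le_abs _
          have h3 := mul_le_mul_of_nonneg_left h2 hk2.le
          linarith
      _ ≤ Real.sqrt Au * Real.sqrt A + k ^ 2 * (Real.sqrt Mu * Real.sqrt M) := by
          have h3 := mul_le_mul_of_nonneg_left hmw hk2.le
          linarith [haw]
      _ ≤ Nu * N := h2d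
  -- absorb: N² = b w w + 2k²M = b u w + 2k²M ≤ Nu N + (1/2) N²
  have hbw : b w w = A - k ^ 2 * M := hb w w
  have habs : 2 * (k ^ 2 * M) ≤ 1 / 2 * N ^ 2 := by
    -- 2k²M ≤ k²H²A ≤ (1/2)A ≤ (1/2)N²
    have h1 : 2 * (k ^ 2 * M) ≤ k ^ 2 * H ^ 2 * A := by
      have h := mul_le_mul_of_nonneg_left hFried (by positivity : (0:ℝ) ≤ 2 * k ^ 2)
      calc 2 * (k ^ 2 * M) = 2 * k ^ 2 * M := by ring
        _ ≤ 2 * k ^ 2 * (H ^ 2 / 2 * A) := h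
        _ = k ^ 2 * H ^ 2 * A := by ring
    have h2 : k ^ 2 * H ^ 2 * A ≤ 1 / 2 * A := by
      calc k ^ 2 * H ^ 2 * A = (H ^ 2 * k ^ 2) * A := by ring
        _ ≤ 1 / 2 * A := mul_le_mul_of_nonneg_right hHk2 hA0
    have h3 : 0 ≤ k ^ 2 * M := mul_nonneg hk2.le hM0
    linarith [hNsq]
  have key : N ^ 2 ≤ 2 * (Nu * N) := by
    have hNid : N ^ 2 = b u w + 2 * (k ^ 2 * M) := by
      rw [← hproj, hbw, hNsq]; ring
    linarith [hbuw, habs, hNid]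
  rcases hN0.eq_or_lt with h | h
  · rw [← h]; positivity
  · refine le_of_mul_le_mul_right ?_ h
    calc N * N = N ^ 2 := (sq N).symm
      _ ≤ 2 * (Nu * N) := key
      _ = 2 * Nu * N := by ring
end

section
/- Let V be a real inner product space whose inner product is (u,v)_{1,k} := a(u,v) + k² m(u,v), where a and m are symmetric positive semidefinite bilinear forms on V and k > 0, and let b(u,v) := a(u,v) − k² m(u,v). Let V₀ ⊆ V be a subspace admitting an orthogonal projection P₀ : V → V₀ with respect to (·,·)_{1,k} (e.g. V₀ complete or finite-dimensional). Let u ∈ V, let w ∈ V₀ satisfy b(u − w, z) = 0 for all z ∈ V₀, and set e := u − w. Suppose ε ≥ 0 satisfies √(m(e,e)) ≤ ε‖e‖_{1,k} and 2kε ≤ 1/2. Then ‖e‖_{1,k} ≤ 2‖u‖_{1,k}, i.e. ‖w − u‖_{1,k} ≤ 2‖u‖_{1,k}. -/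
/-- Cauchy–Schwarz for a symmetric positive semidefinite bilinear form. -/
lemma psd_cauchy_schwarz {V : Type*} [AddCommGroup V] [Module ℝ V]
    (m : V →ₗ[ℝ] V →ₗ[ℝ] ℝ)
    (hsymm : ∀ u v, m u v = m v u) (hpos : ∀ u, 0 ≤ m u u) (x y : V) :
    (m x y) ^ 2 ≤ m x x * m y y := by
  have key : ∀ t : ℝ, 0 ≤ m y y * (t * t) + (2 * m x y) * t + m x x := by
    intro t
    have h := hpos (x + t • y)
    simp only [map_add, map_smul, LinearMap.add_apply, LinearMap.smul_apply,
      smul_eq_mul] at h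
    rw [hsymm y x] at h
    nlinarith [h]
  have hd := discrim_le_zero key
  rw [discrim] at hd
  nlinarith [hd]

set_option maxHeartbeats 1000000000

/-- Abstract version of the energy-norm stability estimate (3.29) in Lemma 3.14
(stability of the coarse Helmholtz projector T₀). -/
theorem stmt11 {V : Type*} [AddCommGroup V] [Module ℝ V]
    (a m : V →ₗ[ℝ] V →ₗ[ℝ] ℝ)
    (ha_symm : ∀ u v, a u v = a v u) (ha_pos : ∀ u, 0 ≤ a u u)
    (hm_symm : ∀ u v, m u v = m v u) (hm_pos : ∀ u, 0 ≤ m u u)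
    (k : ℝ) (hk : 0 < k)
    (ip : V → V → ℝ) (hip : ∀ u v, ip u v = a u v + k ^ 2 * m u v)
    (hdef : ∀ v : V, ip v v = 0 → v = 0)
    (b : V → V → ℝ) (hb : ∀ u v, b u v = a u v - k ^ 2 * m u v)
    (V₀ : Submodule ℝ V) (P₀ : V → V)
    (hP₀mem : ∀ u : V, P₀ u ∈ V₀)
    (hP₀orth : ∀ u : V, ∀ z ∈ V₀, ip (u - P₀ u) z = 0)
    (u w : V) (hw : w ∈ V₀)
    (hgal : ∀ z ∈ V₀, b (u - w) z = 0)
    (ε : ℝ) (hε : 0 ≤ ε)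
    (hL2 : Real.sqrt (m (u - w) (u - w)) ≤ ε * Real.sqrt (ip (u - w) (u - w)))
    (hsmall : 2 * k * ε ≤ 1 / 2) :
    Real.sqrt (ip (u - w) (u - w)) ≤ 2 * Real.sqrt (ip u u) := by
  set p := P₀ u with hp
  -- positivity of ip on the diagonal
  have hip_pos : ∀ x : V, 0 ≤ ip x x := by
    intro x
    rw [hip]
    have := mul_nonneg (sq_nonneg k) (hm_pos x)
    linarith [ha_pos x]
  -- k²-weighted symmetry facts
  have hmup : k ^ 2 * m u p = k ^ 2 * m p u := by rw [hm_symm]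
  have hmuw : k ^ 2 * m u w = k ^ 2 * m w u := by rw [hm_symm]
  have hmpw : k ^ 2 * m p w = k ^ 2 * m w p := by rw [hm_symm]
  -- Pythagoras: ip (u-p) (u-p) ≤ ip u u
  have hPy : ip (u - p) (u - p) ≤ ip u u := by
    have h1 : ip (u - p) p = 0 := hP₀orth u p (hP₀mem u)
    have h2 : 0 ≤ ip p p := hip_pos p
    simp only [hip, map_sub, LinearMap.sub_apply] at h1 h2 ⊢
    linarith [ha_symm u p]
  -- main identity
  have hmain : ip (u - w) (u - w)
      = ip (u - p) (u - p) - 2 * k ^ 2 * m (u - w) (u - p)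
        + 2 * k ^ 2 * m (u - w) (u - w) := by
    have h1 : ip (u - p) (p - w) = 0 :=
      hP₀orth u (p - w) (Submodule.sub_mem V₀ (hP₀mem u) hw)
    have h2 : b (u - w) (p - w) = 0 :=
      hgal (p - w) (Submodule.sub_mem V₀ (hP₀mem u) hw)
    simp only [hip, hb, map_sub, LinearMap.sub_apply] at h1 h2 ⊢
    linarith [ha_symm u p, ha_symm u w, ha_symm p w]
  -- numbers
  set E := Real.sqrt (ip (u - w) (u - w)) with hE
  set U := Real.sqrt (ip u u) with hU
  set sQ := Real.sqrt (ip (u - p) (u - p)) with hsQ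
  set se := Real.sqrt (m (u - w) (u - w)) with hse
  set sd := Real.sqrt (m (u - p) (u - p)) with hsd
  have hE2 : E ^ 2 = ip (u - w) (u - w) := Real.sq_sqrt (hip_pos _)
  have hU2 : U ^ 2 = ip u u := Real.sq_sqrt (hip_pos _)
  have hsQ2 : sQ ^ 2 = ip (u - p) (u - p) := Real.sq_sqrt (hip_pos _)
  have hse2 : se ^ 2 = m (u - w) (u - w) := Real.sq_sqrt (hm_pos _)
  have hsd2 : sd ^ 2 = m (u - p) (u - p) := Real.sq_sqrt (hm_pos _)
  have hE0 : 0 ≤ E := Real.sqrt_nonneg _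
  have hU0 : 0 ≤ U := Real.sqrt_nonneg _
  have hsQ0 : 0 ≤ sQ := Real.sqrt_nonneg _
  have hse0 : 0 ≤ se := Real.sqrt_nonneg _
  have hsd0 : 0 ≤ sd := Real.sqrt_nonneg _
  -- Cauchy–Schwarz for m
  have hcs : (m (u - w) (u - p)) ^ 2 ≤ m (u - w) (u - w) * m (u - p) (u - p) :=
    psd_cauchy_schwarz m hm_symm hm_pos _ _
  have habs : - m (u - w) (u - p) ≤ se * sd := by
    nlinarith [sq_nonneg (se * sd + m (u - w) (u - p)), mul_nonneg hse0 hsd0,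
      hse2, hsd2, hcs]
  -- k √(m v v) ≤ √(ip v v)
  have hkMd : k * sd ≤ sQ := by
    have h : (k * sd) ^ 2 ≤ sQ ^ 2 := by
      rw [hsQ2, hip]
      have := ha_pos (u - p)
      nlinarith [hsd2]
    nlinarith [mul_nonneg hk.le hsd0, hsQ0, h]
  have hkMe : k * se ≤ E := by
    have h : (k * se) ^ 2 ≤ E ^ 2 := by
      rw [hE2, hip]
      have := ha_pos (u - w)
      nlinarith [hse2]
    nlinarith [mul_nonneg hk.le hse0, hE0, h]
  -- sQ ≤ U
  have hsQU : sQ ≤ U := by nlinarith [hPy, hsQ2, hU2, hsQ0, hU0]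
  -- se ≤ ε E, hence k se ≤ (1/4) E
  have hA : k * se ≤ (1 / 4) * E := by nlinarith [hL2, hE0, hk.le]
  have hA0 : 0 ≤ k * se := mul_nonneg hk.le hse0
  have hB0 : 0 ≤ k * sd := mul_nonneg hk.le hsd0
  have hB : k * sd ≤ U := le_trans hkMd hsQU
  -- products
  have hAB : (k * se) * (k * sd) ≤ ((1 / 4) * E) * U :=
    mul_le_mul hA hB hB0 (by positivity)
  have hAA : (k * se) * (k * se) ≤ ((1 / 4) * E) * E :=
    mul_le_mul hA hkMe hA0 (by positivity)
  have hQ2 : sQ ^ 2 ≤ U ^ 2 := by nlinarith [hsQU, hsQ0, hU0]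
  -- the absorbed estimate
  have hmed : - (2 * k ^ 2 * m (u - w) (u - p)) ≤ 2 * ((k * se) * (k * sd)) := by
    have h2k : (0 : ℝ) ≤ 2 * k ^ 2 := by positivity
    have := mul_le_mul_of_nonneg_left habs h2k
    nlinarith [this]
  have hkey : E ^ 2 ≤ U ^ 2 + (1 / 2) * (E * U) + (1 / 2) * E ^ 2 := by
    have hse2' : 2 * k ^ 2 * m (u - w) (u - w) = 2 * ((k * se) * (k * se)) := by
      rw [← hse2]; ring
    have e1 : E ^ 2 = sQ ^ 2 - 2 * k ^ 2 * m (u - w) (u - p)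
        + 2 * k ^ 2 * m (u - w) (u - w) := by rw [hE2, hsQ2]; exact hmain
    linarith [e1, hmed, hAB, hAA, hQ2, hse2']
  -- conclude E ≤ 2 U
  nlinarith [hkey, mul_nonneg hE0 hU0, hE0, hU0]
end

section
/- Let V and W be real vector spaces, let a, m be symmetric positive semidefinite bilinear forms on V and a_W, m_W symmetric positive semidefinite bilinear forms on W, and let k > 0. Define on each space the forms (·,·)_{1,k} := a + k²m (resp. a_W + k²m_W) and b := a − k²m (resp. b_W := a_W − k²m_W). Let E : W → V be a linear map that preserves both forms: a(Ew, Ew') = a_W(w, w') and m(Ew, Ew') = m_W(w, w') for all w, w' ∈ W. Let u ∈ V and let t, p ∈ W satisfy b_W(t, v) = b(u, Ev) for all v ∈ W and (p, v)_{1,k,W} = (u, Ev)_{1,k} for all v ∈ W. Then (Ep, u)_{1,k} = (Et, u)_{1,k} + 2k²·m(u − Et, Ep). -/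
/-- Abstract version of the identity derived in Step 1 of the proof of Lemma 4.1,
relating the Helmholtz local projector (t) and the k-weighted local projector (p). -/
theorem stmt15 {V W : Type*} [AddCommGroup V] [Module ℝ V] [AddCommGroup W] [Module ℝ W]
    (a m : V →ₗ[ℝ] V →ₗ[ℝ] ℝ) (aW mW : W →ₗ[ℝ] W →ₗ[ℝ] ℝ)
    (ha_symm : ∀ u v, a u v = a v u) (ha_pos : ∀ u, 0 ≤ a u u)
    (hm_symm : ∀ u v, m u v = m v u) (hm_pos : ∀ u, 0 ≤ m u u)
    (haW_symm : ∀ u v, aW u v = aW v u) (haW_pos : ∀ u, 0 ≤ aW u u)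
    (hmW_symm : ∀ u v, mW u v = mW v u) (hmW_pos : ∀ u, 0 ≤ mW u u)
    (k : ℝ) (hk : 0 < k)
    (E : W →ₗ[ℝ] V)
    (hEa : ∀ w w' : W, a (E w) (E w') = aW w w')
    (hEm : ∀ w w' : W, m (E w) (E w') = mW w w')
    (u : V) (t p : W)
    (hT : ∀ v : W, aW t v - k ^ 2 * mW t v = a u (E v) - k ^ 2 * m u (E v))
    (hP : ∀ v : W, aW p v + k ^ 2 * mW p v = a u (E v) + k ^ 2 * m u (E v)) :
    a (E p) u + k ^ 2 * m (E p) u =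
      (a (E t) u + k ^ 2 * m (E t) u) + 2 * k ^ 2 * m (u - E t) (E p) := by
  have h1 := hT p
  have h2 := hP t
  have e1 : m (u - E t) (E p) = m u (E p) - mW t p := by
    rw [map_sub, LinearMap.sub_apply, hEm]
  rw [e1, ha_symm (E p) u, hm_symm (E p) u, ha_symm (E t) u, hm_symm (E t) u,
    hmW_symm p t, haW_symm p t] at *
  linarith
end
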